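/- Every connected C_4-minimal graph either has exactly four vertices or is a cycle (connected and 2-regular). -/

import Mathlib

open SimpleGraph

variable {α β : Type*}

/-- A model of `H` in `G`: a family of pairwise disjoint nonempty vertex subsets of `G`,
each inducing a connected subgraph, such that for every edge `h h'` of `H` there is an
edge of `G` between `V h` and `V h'`. -/
def IsMinorModel (G : SimpleGraph α) (H : SimpleGraph β) (V : β → Set α) : Prop :=
  (∀ h, (V h).Nonempty) ∧
  (Pairwise fun h h' => Disjoint (V h) (V h')) ∧
  (∀ h, (G.induce (V h)).Connected) ∧
  ∀ h h', H.Adj h h' → ∃ x ∈ V h, ∃ y ∈ V h', G.Adj x y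

/-- `H` is a minor of `G`. -/
def HasMinor (G : SimpleGraph α) (H : SimpleGraph β) : Prop :=
  ∃ V : β → Set α, IsMinorModel G H V

/-- `G` is `H`-minimal: `H` is a minor of `G`, but for every vertex `x` of `G`,
`H` is not a minor of `G − x`. -/
def MinorMinimal (G : SimpleGraph α) (H : SimpleGraph β) : Prop :=
  HasMinor G H ∧ ∀ x : α, ¬ HasMinor (G.induce {y | y ≠ x}) H

/-- A graph is 2-connected if it has at least 3 vertices, is connected, and stays
connected after deleting any single vertex. -/
def TwoConnected [Fintype α] (G : SimpleGraph α) : Prop :=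
  3 ≤ Fintype.card α ∧ G.Connected ∧ ∀ v : α, (G.induce {w | w ≠ v}).Connected

/-- `G` is a cycle: connected and 2-regular. -/
def IsCycleGraph (G : SimpleGraph α) : Prop :=
  G.Connected ∧ ∀ v : α, (G.neighborSet v).ncard = 2

section Aux
variable {G : SimpleGraph α}

lemma induce_conn_subsingleton {s : Set α} (hne : s.Nonempty) (hs : s.Subsingleton) :
    (G.induce s).Connected := by
  haveI : Nonempty ↑s := ⟨⟨hne.choose, hne.choose_spec⟩⟩
  refine ⟨fun u v => ?_⟩
  have : u = v := Subtype.ext (hs u.2 v.2)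
  rw [this]

lemma head_reach {s : Set α} :
    ∀ (l : List α) (a : α), (a :: l).Chain' G.Adj → (∀ v ∈ a :: l, v ∈ s) →
    ∀ y, y ∈ a :: l → ∀ (has : a ∈ s) (hys : y ∈ s),
    (G.induce s).Reachable ⟨a, has⟩ ⟨y, hys⟩ := by
  intro l
  induction l with
  | nil =>
    intro a _ _ y hy has hys
    simp only [List.mem_singleton] at hy
    subst hy
    rfl
  | cons b t ih =>
    intro a hc hsub y hy has hys
    rcases List.mem_cons.mp hy with rfl | hy'
    · rfl
    · have hab : G.Adj a b := (List.isChain_cons_cons.mp hc).1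
      have hbs : b ∈ s := hsub b (by simp)
      have h1 : (G.induce s).Adj ⟨a, has⟩ ⟨b, hbs⟩ := hab
      exact h1.reachable.trans
        (ih b (List.isChain_cons_cons.mp hc).2 (fun v hv => hsub v (List.mem_cons_of_mem _ hv))
          y hy' hbs hys)

lemma induce_conn_of_chain {l : List α} (hne : l ≠ []) (hc : l.Chain' G.Adj) :
    (G.induce {v | v ∈ l}).Connected := by
  cases l with
  | nil => exact absurd rfl hne
  | cons a t =>
    haveI : Nonempty ↑{v | v ∈ a :: t} := ⟨⟨a, by simp⟩⟩
    refine ⟨fun u v => ?_⟩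
    have hall : ∀ w ∈ a :: t, w ∈ {v | v ∈ a :: t} := fun w hw => hw
    have hu := head_reach t a hc hall u.1 u.2 (by simp) u.2
    have hv := head_reach t a hc hall v.1 v.2 (by simp) v.2
    exact hu.symm.trans hv

lemma hasMinor_induce_of_subset {s : Set α} {V : Fin 4 → Set α}
    (hm : IsMinorModel G (cycleGraph 4) V) (hsub : ∀ i, V i ⊆ s) :
    HasMinor (G.induce s) (cycleGraph 4) := by
  obtain ⟨hne, hdisj, hcon, hadj⟩ := hm
  refine ⟨fun i => {x : s | (x : α) ∈ V i}, ?_, ?_, ?_, ?_⟩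
  · intro i
    obtain ⟨x, hx⟩ := hne i
    exact ⟨⟨x, hsub i hx⟩, hx⟩
  · intro i j hij
    rw [Set.disjoint_left]
    intro x hx hx'
    exact Set.disjoint_left.mp (hdisj hij) hx hx'
  · intro i
    have e : G.induce (V i) ≃g (G.induce s).induce {x : s | (x : α) ∈ V i} :=
      { toFun := fun x => ⟨⟨x.1, hsub i x.2⟩, x.2⟩
        invFun := fun x => ⟨x.1.1, x.2⟩
        left_inv := fun x => rfl
        right_inv := fun x => rfl
        map_rel_iff' := Iff.rfl }
    exact e.connected_iff.mp (hcon i)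
  · intro h h' ha
    obtain ⟨x, hx, y, hy, hxy⟩ := hadj h h' ha
    exact ⟨⟨x, hsub h hx⟩, hx, ⟨y, hsub h' hy⟩, hy, hxy⟩

lemma model_mem (hmin : MinorMinimal G (cycleGraph 4)) {V : Fin 4 → Set α}
    (hm : IsMinorModel G (cycleGraph 4) V) (x : α) : ∃ i, x ∈ V i := by
  by_contra h
  push_neg at h
  exact hmin.2 x (hasMinor_induce_of_subset hm
    (fun i v hv hvx => h i (hvx ▸ hv)))

end Aux
section Aux2
variable {G : SimpleGraph α}

lemma model_of_list {l : List α} (hne : l ≠ []) (h4 : 4 ≤ l.length)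
    (hc : l.Chain' G.Adj) (hn : l.Nodup)
    (hadj : G.Adj (l.getLast hne) (l.head hne)) :
    ∃ V : Fin 4 → Set α, IsMinorModel G (cycleGraph 4) V ∧ ∀ i, V i ⊆ {v | v ∈ l} := by
  match l, hne with
  | a :: b :: c :: d :: t, hne =>
  have hab : G.Adj a b := hc.rel_head
  have hbc : G.Adj b c := (List.isChain_cons_cons.mp hc).2.rel_head
  have hcd : G.Adj c d := (List.isChain_cons_cons.mp (List.isChain_cons_cons.mp hc).2).2.rel_head
  have hcl' : (d :: t).Chain' G.Adj :=
    (List.isChain_cons_cons.mp (List.isChain_cons_cons.mp (List.isChain_cons_cons.mp hc).2).2).2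
  have hlast : (a :: b :: c :: d :: t).getLast hne = (d :: t).getLast (by simp) := by
    simp [List.getLast]
  have hlastmem : (a :: b :: c :: d :: t).getLast hne ∈ d :: t := by
    rw [hlast]; exact List.getLast_mem _
  have hhead : (a :: b :: c :: d :: t).head hne = a := rfl
  rw [hhead] at hadj
  refine ⟨![{a}, {b}, {c}, {v | v ∈ d :: t}], ⟨?_, ?_, ?_, ?_⟩, ?_⟩
  · intro i
    fin_cases i
    · exact ⟨a, rfl⟩
    · exact ⟨b, rfl⟩
    · exact ⟨c, rfl⟩
    · exact ⟨d, by simp⟩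
  · intro i j hij
    fin_cases i <;> fin_cases j <;> simp_all [Set.disjoint_left] <;> aesop
  · intro i
    fin_cases i
    · exact induce_conn_subsingleton ⟨a, rfl⟩ Set.subsingleton_singleton
    · exact induce_conn_subsingleton ⟨b, rfl⟩ Set.subsingleton_singleton
    · exact induce_conn_subsingleton ⟨c, rfl⟩ Set.subsingleton_singleton
    · exact induce_conn_of_chain (by simp) hcl'
  · intro h h' ha
    fin_cases h <;> fin_cases h'
    · exact absurd ha (by decide)
    · exact ⟨a, rfl, b, rfl, hab⟩
    · exact absurd ha (by decide)
    · exact ⟨a, rfl, _, hlastmem, hadj.symm⟩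
    · exact ⟨b, rfl, a, rfl, hab.symm⟩
    · exact absurd ha (by decide)
    · exact ⟨b, rfl, c, rfl, hbc⟩
    · exact absurd ha (by decide)
    · exact absurd ha (by decide)
    · exact ⟨c, rfl, b, rfl, hbc.symm⟩
    · exact absurd ha (by decide)
    · exact ⟨c, rfl, d, by simp, hcd⟩
    · exact ⟨_, hlastmem, a, rfl, hadj⟩
    · exact absurd ha (by decide)
    · exact ⟨d, by simp, c, rfl, hcd.symm⟩
    · exact absurd ha (by decide)
  · intro i
    fin_cases i <;> intro v hv <;> simp_all

end Aux2
section Aux3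
variable {G : SimpleGraph α}

lemma chain'_join {l1 l2 : List α} (h1 : l1.Chain' G.Adj) (h2 : l2.Chain' G.Adj)
    {x y : α} (hx : l1.getLast? = some x) (hy : l2.head? = some y) (hxy : G.Adj x y) :
    (l1 ++ l2).Chain' G.Adj := by
  refine List.isChain_append.mpr ⟨h1, h2, ?_⟩
  intro a ha b hb
  rw [hx, Option.mem_some_iff] at ha
  rw [hy, Option.mem_some_iff] at hb
  rw [← ha, ← hb]
  exact hxy

lemma no_missing (hmin : MinorMinimal G (cycleGraph 4)) {l : List α} (hne : l ≠ [])
    (h4 : 4 ≤ l.length) (hc : l.Chain' G.Adj) (hn : l.Nodup)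
    (hadj : G.Adj (l.getLast hne) (l.head hne)) {x : α} (hx : x ∉ l) : False := by
  obtain ⟨V, hm, hsub⟩ := model_of_list hne h4 hc hn hadj
  exact hmin.2 x (hasMinor_induce_of_subset hm
    (fun i v hv hvx => hx (hvx ▸ hsub i hv)))

lemma exists_chain_list {t : Set α} (hconn : (G.induce t).Connected)
    {u v : α} (hu : u ∈ t) (hv : v ∈ t) :
    ∃ l : List α, l.Chain' G.Adj ∧ l.Nodup ∧ (∀ w ∈ l, w ∈ t) ∧
      l.head? = some u ∧ l.getLast? = some v := by
  classical
  obtain ⟨w⟩ := hconn.preconnected ⟨u, hu⟩ ⟨v, hv⟩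
  set p : (G.induce t).Walk ⟨u, hu⟩ ⟨v, hv⟩ := w.toPath.1 with hp
  refine ⟨p.support.map Subtype.val, ?_, ?_, ?_, ?_, ?_⟩
  · exact List.isChain_map_of_isChain Subtype.val (fun a b hab => hab) (Walk.isChain_adj_support p)
  · exact ((Walk.isPath_def _).mp w.toPath.2).map Subtype.val_injective
  · intro x hx
    simp only [List.mem_map] at hx
    obtain ⟨y, _, rfl⟩ := hx
    exact y.2
  · rw [Walk.support_eq_cons]
    rfl
  · have h1 : p.support ≠ [] := Walk.support_ne_nil p
    have h2 : p.support.getLast h1 = ⟨v, hv⟩ := Walk.getLast_support p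
    rw [List.getLast?_map]
    rw [List.getLast?_eq_getLast h1, h2]
    rfl

end Aux3
section Aux4
variable {G : SimpleGraph α}

lemma no_missing' (hmin : MinorMinimal G (cycleGraph 4)) {l : List α}
    (h4 : 4 ≤ l.length) (hc : l.Chain' G.Adj) (hn : l.Nodup)
    {u w : α} (hu : l.getLast? = some u) (hw : l.head? = some w) (huw : G.Adj u w)
    {x : α} (hx : x ∉ l) : False := by
  have hne : l ≠ [] := by rintro rfl; simp at hu
  have h1 : l.getLast hne = u := by
    rw [List.getLast?_eq_getLast hne] at hu
    exact Option.some.inj hu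
  have h2 : l.head hne = w := by
    rw [List.head?_eq_head hne] at hw
    exact Option.some.inj hw
  exact no_missing hmin hne h4 hc hn (by rw [h1, h2]; exact huw) hx

lemma nodup_parts {L1 L2 : List α} {x : α} (h : (L1 ++ x :: L2).Nodup) :
    L1.Nodup ∧ L2.Nodup ∧ x ∉ L1 ∧ x ∉ L2 ∧ ∀ a ∈ L1, a ∉ L2 := by
  rw [List.nodup_append'] at h
  obtain ⟨h1, h2, h3⟩ := h
  rw [List.nodup_cons] at h2
  refine ⟨h1, h2.2, fun hx => h3 hx (by simp), h2.1, fun a ha ha2 => h3 ha (by simp [ha2])⟩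

lemma chord_absurd (hmin : MinorMinimal G (cycleGraph 4))
    {L : List α} (hc : L.Chain' G.Adj) (hn : L.Nodup) {u w : α}
    (hu : L.getLast? = some u) (hw : L.head? = some w) (huw : G.Adj u w)
    (h5 : 5 ≤ L.length)
    {x y : α} {L1 L2 L3 : List α} (hL : L = L1 ++ x :: (L2 ++ y :: L3))
    (hxy : G.Adj x y) (hL2 : L2 ≠ []) (hL13 : ¬(L1 = [] ∧ L3 = [])) : False := by
  subst hL
  obtain ⟨hn1, hn2, hx1, hx2, hd1⟩ := nodup_parts hn
  obtain ⟨hn2a, hn3, hy2, hy3, hd23⟩ := nodup_parts hn2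
  have hxL2 : x ∉ L2 := fun h => hx2 (by simp [h])
  have hxy' : x ≠ y := fun h => hx2 (by simp [h])
  have hxL3 : x ∉ L3 := fun h => hx2 (by simp [h])
  have hd12 : ∀ a ∈ L1, a ∉ L2 := fun a ha h => hd1 a ha (by simp [h])
  have hd1y : ∀ a ∈ L1, a ≠ y := fun a ha h => hd1 a ha (by simp [h])
  have hd13 : ∀ a ∈ L1, a ∉ L3 := fun a ha h => hd1 a ha (by simp [h])
  have hyL1 : y ∉ L1 := fun h => hd1y _ h rfl
  obtain ⟨m, L2', rfl⟩ : ∃ m L2', L2 = m :: L2' := by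
    cases L2 with
    | nil => exact absurd rfl hL2
    | cons m t => exact ⟨m, t, rfl⟩
  have hlen : 5 ≤ L1.length + L2'.length + L3.length + 3 := by
    have := h5; simp [List.length_append] at this; omega
  rcases Nat.eq_zero_or_pos L2'.length with h0 | hpos
  · -- L2 = [m] : go the long way around: B = y :: (L3 ++ (L1 ++ [x]))
    have hL2' : L2' = [] := List.length_eq_zero_iff.mp h0
    subst hL2'
    -- pieces of the chain
    have hc1 : (L1 ++ [x]).Chain' G.Adj := by
      have hsplit : L1 ++ x :: ([m] ++ y :: L3) = (L1 ++ [x]) ++ ([m] ++ y :: L3) := by simp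
      exact (List.isChain_append.mp (hsplit ▸ hc)).1
    have hc2 : (y :: L3).Chain' G.Adj := by
      have hsplit : L1 ++ x :: ([m] ++ y :: L3) = (L1 ++ [x, m]) ++ (y :: L3) := by simp
      exact (List.isChain_append.mp (hsplit ▸ hc)).2.1
    -- identify u and w
    have hu3 : (y :: L3).getLast? = some u := by
      rw [show L1 ++ x :: ([m] ++ y :: L3) = (L1 ++ [x, m]) ++ (y :: L3) by simp] at hu
      rw [List.getLast?_append, List.getLast?_eq_getLast (l := y :: L3) (by simp),
        Option.some_or] at hu
      rw [List.getLast?_eq_getLast (l := y :: L3) (by simp)]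
      exact hu
    have hw1 : (L1 ++ [x]).head? = some w := by
      rw [List.head?_append] at hw ⊢
      simpa using hw
    have hmL1 : m ∉ L1 := fun h => hd12 _ h (by simp)
    have hxm : x ≠ m := fun h => hxL2 (by simp [h])
    have hmy : m ≠ y := fun h => hy2 (by simp [h])
    have hmL3 : m ∉ L3 := hd23 m (by simp)
    have hL31 : ∀ a ∈ L3, a ∉ L1 := fun a ha h => hd13 a h ha
    have hcB : (y :: (L3 ++ (L1 ++ [x]))).Chain' G.Adj := by
      have := chain'_join (G := G) hc2 hc1 hu3 hw1 huw
      simpa using this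
    have hnB : (y :: (L3 ++ (L1 ++ [x]))).Nodup := by
      simp only [List.nodup_cons, List.mem_append, List.nodup_append, List.mem_singleton,
        List.nodup_singleton]
      aesop
    have hB4 : 4 ≤ (y :: (L3 ++ (L1 ++ [x]))).length := by
      simp [List.length_append]; omega
    have hlastB : (y :: (L3 ++ (L1 ++ [x]))).getLast? = some x := by
      rw [show y :: (L3 ++ (L1 ++ [x])) = (y :: (L3 ++ L1)) ++ [x] by simp]
      exact List.getLast?_concat
    have hheadB : (y :: (L3 ++ (L1 ++ [x]))).head? = some y := rfl
    have hmB : m ∉ y :: (L3 ++ (L1 ++ [x])) := by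
      simp only [List.mem_cons, List.mem_append, List.mem_singleton, List.not_mem_nil,
        or_false]
      rintro (rfl | h | h | rfl)
      · exact hy2 (by simp)
      · exact hd23 m (by simp) h
      · exact hd12 _ h (by simp)
      · exact hxL2 (by simp)
    exact no_missing' hmin hB4 hcB hnB hlastB hheadB hxy hmB
  · -- L2 has length ≥ 2 : short cycle A = x :: ((m :: L2') ++ [y])
    have hymL2' : y ∉ m :: L2' := hy2
    have hxmL2' : x ∉ m :: L2' := hxL2
    have hnmL2' : (m :: L2').Nodup := hn2a
    have hcA : (x :: ((m :: L2') ++ [y])).Chain' G.Adj := by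
      have hsplit : L1 ++ x :: (m :: L2' ++ y :: L3)
          = (L1 ++ ((x :: m :: L2') ++ [y])) ++ L3 := by simp
      have h1 := (List.isChain_append.mp (hsplit ▸ hc)).1
      exact (List.isChain_append.mp h1).2.1
    have hnA : (x :: ((m :: L2') ++ [y])).Nodup := by
      simp only [List.nodup_cons, List.mem_append, List.mem_singleton, List.nodup_append,
        List.nodup_singleton]
      aesop
    have hA4 : 4 ≤ (x :: ((m :: L2') ++ [y])).length := by
      simp [List.length_append]; omega
    have hlastA : (x :: ((m :: L2') ++ [y])).getLast? = some y := by
      rw [show x :: ((m :: L2') ++ [y]) = (x :: m :: L2') ++ [y] by simp]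
      exact List.getLast?_concat
    have hheadA : (x :: ((m :: L2') ++ [y])).head? = some x := rfl
    -- a missing vertex
    obtain ⟨z, hz⟩ : ∃ z, z ∈ L1 ∨ z ∈ L3 := by
      rcases List.exists_mem_of_ne_nil (L1 ++ L3) (fun h => by
        simp [List.append_eq_nil_iff] at h; exact hL13 h) with ⟨z, hz⟩
      exact ⟨z, List.mem_append.mp hz⟩
    have hzA : z ∉ x :: ((m :: L2') ++ [y]) := by
      have hsub : ∀ v, v ∈ x :: ((m :: L2') ++ [y]) → v = x ∨ v ∈ m :: L2' ∨ v = y := by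
        intro v hv
        rw [List.mem_cons, List.mem_append, List.mem_singleton] at hv
        exact hv
      intro hmem
      rcases hsub z hmem with rfl | h | rfl
      · rcases hz with hz | hz
        · exact hx1 hz
        · exact hxL3 hz
      · rcases hz with hz | hz
        · exact hd12 _ hz h
        · exact hd23 _ h hz
      · rcases hz with hz | hz
        · exact hd1y _ hz rfl
        · exact hy3 hz
    exact no_missing' hmin hA4 hcA hnA hlastA hheadA hxy.symm hzA

end Aux4
section Aux5
variable {G : SimpleGraph α}

lemma head?_append_of_head? {l1 l2 : List α} {a : α} (h : l1.head? = some a) :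
    (l1 ++ l2).head? = some a := by
  rw [List.head?_append, h]; rfl

lemma getLast?_append_of_getLast? {l1 l2 : List α} {a : α} (h : l2.getLast? = some a) :
    (l1 ++ l2).getLast? = some a := by
  rw [List.getLast?_append, h]; rfl

lemma ne_nil_of_head? {l : List α} {a : α} (h : l.head? = some a) : l ≠ [] := by
  rintro rfl; simp at h

lemma mem_split_ne_getLast {l : List α} {w : α} (hne : l ≠ []) (hw : w ∈ l)
    (hne2 : w ≠ l.getLast hne) : ∃ P1 P2, P2 ≠ [] ∧ l = P1 ++ w :: P2 := by
  obtain ⟨P1, P2, rfl⟩ := List.append_of_mem hw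
  cases P2 with
  | nil =>
    exfalso
    exact hne2 (by simp [List.getLast_append_of_ne_nil (l' := [w])])
  | cons a t => exact ⟨P1, a :: t, by simp, rfl⟩

theorem c4_minimal' (G : SimpleGraph α) [Fintype α] (hconn : G.Connected)
    (hmin : MinorMinimal G (cycleGraph 4)) :
    Fintype.card α = 4 ∨ (G.Connected ∧ ∀ v : α, (G.neighborSet v).ncard = 2) := by
  classical
  obtain ⟨V, hm⟩ := hmin.1
  obtain ⟨hVne, hVdisj, hVcon, hVadj⟩ := hm
  obtain ⟨a0, ha0, b1, hb1, hab01⟩ := hVadj 0 1 (by decide)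
  obtain ⟨a1, ha1, b2, hb2, hab12⟩ := hVadj 1 2 (by decide)
  obtain ⟨a2, ha2, b3, hb3, hab23⟩ := hVadj 2 3 (by decide)
  obtain ⟨a3, ha3, b0, hb0, hab30⟩ := hVadj 3 0 (by decide)
  obtain ⟨l0, hc0, hn0, hm0, hh0, hg0⟩ := exists_chain_list (hVcon 0) hb0 ha0
  obtain ⟨l1, hc1, hn1, hm1, hh1, hg1⟩ := exists_chain_list (hVcon 1) hb1 ha1
  obtain ⟨l2, hc2, hn2, hm2, hh2, hg2⟩ := exists_chain_list (hVcon 2) hb2 ha2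
  obtain ⟨l3, hc3, hn3, hm3, hh3, hg3⟩ := exists_chain_list (hVcon 3) hb3 ha3
  -- the Hamiltonian list
  set L : List α := l0 ++ (l1 ++ (l2 ++ l3)) with hLdef
  have hcL : L.Chain' G.Adj := by
    refine chain'_join hc0 (chain'_join hc1 (chain'_join hc2 hc3 hg2 hh3 hab23) hg1
      (head?_append_of_head? hh2) hab12) hg0 (head?_append_of_head? hh1) hab01
  have hdisjL : ∀ (li lj : List α) (i j : Fin 4), i ≠ j → (∀ w ∈ li, w ∈ V i) →
      (∀ w ∈ lj, w ∈ V j) → li.Disjoint lj := fun li lj i j hij hi hj a hai haj =>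
    Set.disjoint_left.mp (hVdisj hij) (hi a hai) (hj a haj)
  have hnL : L.Nodup := by
    refine List.Nodup.append hn0 (List.Nodup.append hn1 (List.Nodup.append hn2 hn3
      (hdisjL l2 l3 2 3 (by decide) hm2 hm3)) ?_) ?_
    · intro a ha1' ha2'
      rcases List.mem_append.mp ha2' with h | h
      · exact hdisjL l1 l2 1 2 (by decide) hm1 hm2 ha1' h
      · exact hdisjL l1 l3 1 3 (by decide) hm1 hm3 ha1' h
    · intro a ha0' ha'
      rcases List.mem_append.mp ha' with h | h
      · exact hdisjL l0 l1 0 1 (by decide) hm0 hm1 ha0' h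
      rcases List.mem_append.mp h with h | h
      · exact hdisjL l0 l2 0 2 (by decide) hm0 hm2 ha0' h
      · exact hdisjL l0 l3 0 3 (by decide) hm0 hm3 ha0' h
  have hgL : L.getLast? = some a3 :=
    getLast?_append_of_getLast? (getLast?_append_of_getLast? (getLast?_append_of_getLast? hg3))
  have hhL : L.head? = some b0 := head?_append_of_head? hh0
  have hLne : L ≠ [] := ne_nil_of_head? hhL
  have hL4 : 4 ≤ L.length := by
    have p0 : 0 < l0.length := List.length_pos_iff.mpr (ne_nil_of_head? hh0)
    have p1 : 0 < l1.length := List.length_pos_iff.mpr (ne_nil_of_head? hh1)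
    have p2 : 0 < l2.length := List.length_pos_iff.mpr (ne_nil_of_head? hh2)
    have p3 : 0 < l3.length := List.length_pos_iff.mpr (ne_nil_of_head? hh3)
    simp only [hLdef, List.length_append]
    omega
  have hadjL : G.Adj (L.getLast hLne) (L.head hLne) := by
    rw [List.getLast?_eq_getLast hLne] at hgL
    rw [List.head?_eq_head hLne] at hhL
    rw [Option.some.inj hgL, Option.some.inj hhL]
    exact hab30
  -- every vertex is on the list
  have hcover : ∀ x : α, x ∈ L := by
    intro x
    obtain ⟨W, hW, hWsub⟩ := model_of_list hLne hL4 hcL hnL hadjL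
    obtain ⟨i, hi⟩ := model_mem hmin hW x
    exact hWsub i hi
  have hcard : Fintype.card α = L.length := by
    rw [← List.toFinset_card_of_nodup hnL]
    rw [← Finset.card_univ]
    congr 1
    exact (Finset.eq_univ_iff_forall.mpr (fun x => List.mem_toFinset.mpr (hcover x))).symm
  by_cases h4 : Fintype.card α = 4
  · exact Or.inl h4
  have h5 : 5 ≤ L.length := by omega
  refine Or.inr ⟨hconn, fun v => ?_⟩
  obtain ⟨P, S, hPS⟩ := List.append_of_mem (hcover v)
  obtain ⟨prv, nxt, hpn, hset⟩ : ∃ p q : α, p ≠ q ∧ G.neighborSet v = {p, q} := by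
    have hvne : ∀ {w' : α}, G.Adj v w' → w' ≠ v := fun h => h.ne'
    rcases P with _ | ⟨p, P'⟩ <;> rcases S with _ | ⟨s, S'⟩
    · rw [hPS] at h5; simp at h5
    · -- P = [], S = s :: S'
      simp only [List.nil_append] at hPS
      have hb0v : b0 = v := by
        rw [hPS] at hhL; exact (Option.some.inj hhL).symm
      obtain ⟨t, S'', rfl⟩ : ∃ t S'', S' = t :: S'' := by
        rw [hPS] at h5
        cases S' with
        | nil => simp at h5
        | cons t S'' => exact ⟨t, S'', rfl⟩
      have hga3 : a3 = (t :: S'').getLast (by simp) := by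
        have h1 : L.getLast? = some ((t :: S'').getLast (by simp)) := by
          rw [hPS, show v :: s :: t :: S'' = [v, s] ++ t :: S'' by simp]
          exact getLast?_append_of_getLast? (List.getLast?_eq_getLast (by simp))
        rw [hgL] at h1
        exact Option.some.inj h1
      have ha3mem : a3 ∈ t :: S'' := hga3 ▸ List.getLast_mem _
      have hadjvs : G.Adj v s := by
        have := hPS ▸ hcL
        exact this.rel_head
      have hadjprv : G.Adj a3 v := hb0v ▸ hab30
      have hsnotin : s ∉ t :: S'' := by
        have := hPS ▸ hnL
        simp only [List.nodup_cons] at this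
        exact (this.2).1
      refine ⟨a3, s, fun h => hsnotin (h ▸ ha3mem), ?_⟩
      ext w'
      simp only [mem_neighborSet, Set.mem_insert_iff, Set.mem_singleton_iff]
      constructor
      · intro hadjw
        by_contra hcon
        push_neg at hcon
        obtain ⟨hw1, hw2⟩ := hcon
        have hwmem : w' ∈ t :: S'' := by
          have h0 := hcover w'
          rw [hPS] at h0
          rcases List.mem_cons.mp h0 with rfl | h0
          · exact absurd rfl (hvne hadjw)
          · rcases List.mem_cons.mp h0 with rfl | h0
            · exact absurd rfl hw2
            · exact h0
        obtain ⟨S1, S2, hS2, hS12⟩ :=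
          mem_split_ne_getLast (by simp) hwmem (fun h => hw1 (h.trans hga3.symm))
        refine chord_absurd hmin hcL hnL hgL hhL hab30 h5
          (L1 := []) (L2 := s :: S1) (L3 := S2) (x := v) (y := w')
          (by rw [hPS, hS12]; simp) hadjw (by simp) ?_
        rintro ⟨-, rfl⟩
        exact hS2 rfl
      · rintro (rfl | rfl)
        · exact hadjprv.symm
        · exact hadjvs
    · -- P = p :: P', S = []
      have hPS' : L = (p :: P') ++ [v] := by rw [hPS]
      have ha3v : a3 = v := by
        have h1 : L.getLast? = some v := by
          rw [hPS']; exact List.getLast?_concat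
        rw [hgL] at h1
        exact Option.some.inj h1
      have hb0p : b0 = p := by
        rw [hPS'] at hhL
        exact (Option.some.inj hhL).symm
      have hadjvp : G.Adj v p := ha3v ▸ hb0p ▸ hab30
      obtain ⟨q, P'', rfl⟩ : ∃ q P'', P' = q :: P'' := by
        rw [hPS'] at h5
        cases P' with
        | nil => simp at h5
        | cons q P'' => exact ⟨q, P'', rfl⟩
      have hchain : (p :: q :: P'').Chain' G.Adj ∧
          ∀ x ∈ (p :: q :: P'').getLast?, ∀ y ∈ List.head? [v], G.Adj x y := by
        have := List.isChain_append.mp (hPS' ▸ hcL)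
        exact ⟨this.1, this.2.2⟩
      set prv := (q :: P'').getLast (by simp) with hprvdef
      have hprvlast : (p :: q :: P'').getLast (by simp) = prv := List.getLast_cons _
      have hadjprv : G.Adj prv v := by
        refine hchain.2 _ ?_ v rfl
        rw [List.getLast?_eq_getLast (by simp), hprvlast]
        rfl
      have hprvmem : prv ∈ q :: P'' := List.getLast_mem _
      have hpnotin : p ∉ q :: P'' := by
        have h1 := hPS' ▸ hnL
        rw [List.cons_append, List.nodup_cons] at h1
        exact fun h => h1.1 (List.mem_append_left _ h)
      refine ⟨prv, p, fun h => hpnotin (h ▸ hprvmem), ?_⟩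
      ext w'
      simp only [mem_neighborSet, Set.mem_insert_iff, Set.mem_singleton_iff]
      constructor
      · intro hadjw
        by_contra hcon
        push_neg at hcon
        obtain ⟨hw1, hw2⟩ := hcon
        have hwmem : w' ∈ q :: P'' := by
          have h0 := hcover w'
          rw [hPS'] at h0
          rcases List.mem_append.mp h0 with h0 | h0
          · rcases List.mem_cons.mp h0 with rfl | h0
            · exact absurd rfl hw2
            · exact h0
          · rw [List.mem_singleton] at h0
            exact absurd h0 (hvne hadjw)
        obtain ⟨P1, P2, hP2, hP12⟩ :=
          mem_split_ne_getLast (by simp) hwmem (fun h => hw1 (h ▸ hprvdef))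
        refine chord_absurd hmin hcL hnL hgL hhL hab30 h5
          (L1 := p :: P1) (L2 := P2) (L3 := []) (x := w') (y := v)
          (by rw [hPS, hP12]; simp) hadjw.symm hP2 ?_
        rintro ⟨h, -⟩
        exact List.cons_ne_nil _ _ h
      · rintro (rfl | rfl)
        · exact hadjprv.symm
        · exact hadjvp
    · -- P = p :: P', S = s :: S'
      have hPS' : L = (p :: P') ++ v :: s :: S' := hPS
      have hsplit := List.isChain_append.mp (hPS' ▸ hcL)
      have hadjvs : G.Adj v s := hsplit.2.1.rel_head
      set prv := (p :: P').getLast (by simp) with hprvdef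
      have hadjprv : G.Adj prv v := by
        refine hsplit.2.2 _ ?_ v rfl
        rw [List.getLast?_eq_getLast (by simp)]
        rfl
      have hprvmem : prv ∈ p :: P' := List.getLast_mem _
      have hnodup := hPS' ▸ hnL
      rw [List.nodup_append'] at hnodup
      have hsnot : s ∉ p :: P' := fun h => hnodup.2.2 h (by simp)
      refine ⟨prv, s, fun h => hsnot (h ▸ hprvmem), ?_⟩
      ext w'
      simp only [mem_neighborSet, Set.mem_insert_iff, Set.mem_singleton_iff]
      constructor
      · intro hadjw
        by_contra hcon
        push_neg at hcon
        obtain ⟨hw1, hw2⟩ := hcon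
        have hwmem : w' ∈ p :: P' ∨ w' ∈ s :: S' := by
          have h0 := hcover w'
          rw [hPS'] at h0
          rcases List.mem_append.mp h0 with h0 | h0
          · exact Or.inl h0
          · rcases List.mem_cons.mp h0 with rfl | h0
            · exact absurd rfl (hvne hadjw)
            · exact Or.inr h0
        rcases hwmem with hwmem | hwmem
        · obtain ⟨P1, P2, hP2, hP12⟩ :=
            mem_split_ne_getLast (by simp) hwmem (fun h => hw1 (h ▸ hprvdef))
          refine chord_absurd hmin hcL hnL hgL hhL hab30 h5
            (L1 := P1) (L2 := P2) (L3 := s :: S') (x := w') (y := v)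
            (by rw [hPS', hP12]; simp) hadjw.symm hP2 ?_
          rintro ⟨-, h⟩
          exact List.cons_ne_nil _ _ h
        · have hwS' : w' ∈ S' := by
            rcases List.mem_cons.mp hwmem with rfl | h
            · exact absurd rfl hw2
            · exact h
          obtain ⟨S1, S2, rfl⟩ := List.append_of_mem hwS'
          refine chord_absurd hmin hcL hnL hgL hhL hab30 h5
            (L1 := p :: P') (L2 := s :: S1) (L3 := S2) (x := v) (y := w')
            (by rw [hPS']; simp) hadjw (by simp) ?_
          rintro ⟨h, -⟩
          exact List.cons_ne_nil _ _ h
      · rintro (rfl | rfl)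
        · exact hadjprv.symm
        · exact hadjvs
  rw [hset]
  exact Set.ncard_pair hpn

end Aux5

/-- Every connected `C₄`-minimal graph has exactly four vertices or is a cycle
(connected and 2-regular). -/
theorem c4_minimal (G : SimpleGraph α) [Fintype α] (hconn : G.Connected)
    (hmin : MinorMinimal G (cycleGraph 4)) :
    Fintype.card α = 4 ∨ IsCycleGraph G := by
  exact (c4_minimal' G hconn hmin).imp id (fun h => ⟨h.1, h.2⟩)
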